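/- Let ℓ = 6, and let m ≥ 1 and p ≥ 0 be integers with 0 ≤ m − 2p ≤ 4, so that [m−p,p] ∈ Λ(m,6). Then the number of restricted tableaux |𝒯₆([m−p,p])| equals (3^⌊(m−1)/2⌋ + 1)/2 if m−2p ∈ {0,1}, equals (3^⌊(m−1)/2⌋ − 1)/2 if m−2p ∈ {3,4}, and equals 3^⌊(m−1)/2⌋ if m−2p = 2. -/

import Mathlib

/-- `AddBox μ ν` means `ν` is obtained from `μ` by adding a single box (`μ → ν`). -/
def AddBox (μ ν : YoungDiagram) : Prop := μ ≤ ν ∧ ν.card = μ.card + 1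

/-- `AdjBox μ ν` means `μ ↔ ν`, i.e. the diagrams differ by a single box. -/
def AdjBox (μ ν : YoungDiagram) : Prop := AddBox μ ν ∨ AddBox ν μ

/-- `RowsEq μ L` means the row lengths of `μ` are given by the list `L`
(rows beyond the length of `L` being empty). -/
def RowsEq (μ : YoungDiagram) (L : List ℕ) : Prop := ∀ i, μ.rowLen i = L.getD i 0

/-- `Λ(j,ℓ)`: Young diagrams of size `j` with at most two rows whose
row difference is at most `ℓ - 2`. -/
def LambdaSet (j ℓ : ℕ) : Set YoungDiagram :=
  {μ | μ.card = j ∧ μ.rowLen 2 = 0 ∧ μ.rowLen 0 - μ.rowLen 1 ≤ ℓ - 2}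

/-- `Γ(ℓ)` for a finite `ℓ ≥ 6`. -/
def GammaSet (ℓ : ℕ) : Set YoungDiagram :=
  {μ | μ.colLen 0 + μ.colLen 1 ≤ 4 ∧ μ.rowLen 0 + μ.rowLen 1 ≤ ℓ - 2}
    ∪ {μ | RowsEq μ [ℓ - 2, 1, 1]}

/-- `Γ(∞)`: diagrams whose first two column lengths sum to at most `4`. -/
def GammaInf : Set YoungDiagram := {μ | μ.colLen 0 + μ.colLen 1 ≤ 4}

/-- A Young-tableau path of length `m`, with the `j`-th shape restricted to lie in `P j`. -/
def IsTabPath (P : ℕ → Set YoungDiagram) (m : ℕ) (f : Fin (m + 1) → YoungDiagram) : Prop :=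
  f 0 = ⊥ ∧ (∀ j : Fin m, AddBox (f j.castSucc) (f j.succ)) ∧
    ∀ j : Fin (m + 1), f j ∈ P (j : ℕ)

/-- An oscillating-tableau path of length `m` with all shapes in `Γ`. -/
def IsOscPath (Γ : Set YoungDiagram) (m : ℕ) (f : Fin (m + 1) → YoungDiagram) : Prop :=
  f 0 = ⊥ ∧ (∀ j : Fin m, AdjBox (f j.castSucc) (f j.succ)) ∧
    ∀ j : Fin (m + 1), f j ∈ Γ

/-- The number of Young tableaux (paths) of length `m`, with shapes restricted by `P`,
whose final shape has row lengths `L`. -/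
noncomputable def tabCount (P : ℕ → Set YoungDiagram) (m : ℕ) (L : List ℕ) : ℕ :=
  Nat.card {f : Fin (m + 1) → YoungDiagram //
    IsTabPath P m f ∧ RowsEq (f (Fin.last m)) L}

/-- The number of oscillating tableaux of length `m` with shapes in `Γ`
whose final shape has row lengths `L`. -/
noncomputable def oscCount (Γ : Set YoungDiagram) (m : ℕ) (L : List ℕ) : ℕ :=
  Nat.card {f : Fin (m + 1) → YoungDiagram //
    IsOscPath Γ m f ∧ RowsEq (f (Fin.last m)) L}

/-- The number of oscillating tableaux of length `m` with shapes in `Γ` and final shape `ν`. -/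
noncomputable def oscCountD (Γ : Set YoungDiagram) (m : ℕ) (ν : YoungDiagram) : ℕ :=
  Nat.card {f : Fin (m + 1) → YoungDiagram //
    IsOscPath Γ m f ∧ f (Fin.last m) = ν}


open YoungDiagram Finset

/-- The two-row diagram with rows `a, min a b`. -/
def D (a b : ℕ) : YoungDiagram where
  cells := ({0} ×ˢ Finset.range a) ∪ ({1} ×ˢ Finset.range (min a b))
  isLowerSet := by
    rintro ⟨i, j⟩ ⟨i', j'⟩ ⟨hi, hj⟩ h
    simp only [Finset.coe_union, Finset.coe_product, Set.mem_union, Set.mem_prod,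
      Finset.coe_singleton, Set.mem_singleton_iff, Finset.coe_range, Set.mem_Iio] at h ⊢
    rcases h with ⟨h0, hja⟩ | ⟨h1, hjb⟩
    · subst h0; left; exact ⟨Nat.le_zero.mp hi, lt_of_le_of_lt hj hja⟩
    · subst h1
      interval_cases i'
      · left; exact ⟨rfl, lt_of_le_of_lt hj (lt_of_lt_of_le hjb (min_le_left _ _))⟩
      · right; exact ⟨rfl, lt_of_le_of_lt hj hjb⟩

theorem mem_D {a b i j : ℕ} : (i, j) ∈ D a b ↔ (i = 0 ∧ j < a) ∨ (i = 1 ∧ j < min a b) := by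
  show (i, j) ∈ (D a b).cells ↔ _
  simp [D]
  tauto

theorem rowLen_D0 (a b : ℕ) : (D a b).rowLen 0 = a := by
  rcases Nat.lt_or_ge ((D a b).rowLen 0) a with h | h
  · exact absurd (mem_iff_lt_rowLen.mp (mem_D.mpr (Or.inl ⟨rfl, h⟩))) (lt_irrefl _)
  · rcases Nat.eq_or_lt_of_le h with h | h
    · omega
    · have : ((0 : ℕ), a) ∈ D a b := mem_iff_lt_rowLen.mpr h
      rw [mem_D] at this; omega

theorem rowLen_D1 (a b : ℕ) : (D a b).rowLen 1 = min a b := by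
  rcases Nat.lt_or_ge ((D a b).rowLen 1) (min a b) with h | h
  · exact absurd (mem_iff_lt_rowLen.mp (mem_D.mpr (Or.inr ⟨rfl, h⟩))) (lt_irrefl _)
  · rcases Nat.eq_or_lt_of_le h with h | h
    · omega
    · have : ((1 : ℕ), min a b) ∈ D a b := mem_iff_lt_rowLen.mpr h
      rw [mem_D] at this; omega

theorem rowLen_D2 (a b i : ℕ) (hi : 2 ≤ i) : (D a b).rowLen i = 0 := by
  by_contra h
  have : (i, (0 : ℕ)) ∈ D a b := mem_iff_lt_rowLen.mpr (Nat.pos_of_ne_zero h)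
  rw [mem_D] at this; omega

theorem card_D (a b : ℕ) : (D a b).card = a + min a b := by
  show (((_ : Finset _) ∪ _)).card = _
  rw [Finset.card_union_of_disjoint, Finset.card_product, Finset.card_product]
  · simp
  · simp [Finset.disjoint_left]

/-- A diagram with at most two rows is determined by its first two row lengths. -/
theorem eq_D {μ : YoungDiagram} (h2 : μ.rowLen 2 = 0) : μ = D (μ.rowLen 0) (μ.rowLen 1) := by
  have hanti := μ.rowLen_anti 1
  have h01 : μ.rowLen 1 ≤ μ.rowLen 0 := μ.rowLen_anti 0 1 (by norm_num)
  apply SetLike.ext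
  rintro ⟨i, j⟩
  rw [mem_iff_lt_rowLen, mem_D, min_eq_right h01]
  match i with
  | 0 => omega
  | 1 => omega
  | (n+2) =>
    have : μ.rowLen (n+2) ≤ μ.rowLen 2 := μ.rowLen_anti 2 (n+2) (by omega)
    omega

theorem rowLen_le_of_le {μ ν : YoungDiagram} (h : μ ≤ ν) (i : ℕ) :
    μ.rowLen i ≤ ν.rowLen i := by
  by_contra hc
  push_neg at hc
  have h1 : (i, ν.rowLen i) ∈ μ := mem_iff_lt_rowLen.mpr hc
  have h2 : (i, ν.rowLen i) ∈ ν := h h1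
  rw [mem_iff_lt_rowLen] at h2; omega

theorem D_le_D {x y a b : ℕ} (hx : x ≤ a) (hy : min x y ≤ min a b) : D x y ≤ D a b := by
  intro ⟨i, j⟩ hij
  rw [mem_D] at hij ⊢
  rcases Nat.le_total x y with h|h <;> rcases Nat.le_total a b with h'|h' <;>
    simp [Nat.min_eq_left, Nat.min_eq_right, h, h'] at hy hij ⊢ <;> omega

/-- Classification of the diagrams covered by `D a b`. -/
theorem addBox_D_iff {μ : YoungDiagram} {a b : ℕ} (hb : b ≤ a) :
    AddBox μ (D a b) ↔ (1 ≤ a ∧ b ≤ a - 1 ∧ μ = D (a-1) b) ∨ (1 ≤ b ∧ μ = D a (b-1)) := by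
  constructor
  · rintro ⟨hle, hcard⟩
    have h2 : μ.rowLen 2 = 0 :=
      Nat.le_zero.mp (le_trans (rowLen_le_of_le hle 2) (le_of_eq (rowLen_D2 a b 2 le_rfl)))
    have hμ := eq_D h2
    set x := μ.rowLen 0 with hxdef
    set y := μ.rowLen 1 with hydef
    have hyx : y ≤ x := μ.rowLen_anti 0 1 (by norm_num)
    have hxa : x ≤ a := le_trans (rowLen_le_of_le hle 0) (le_of_eq (rowLen_D0 a b))
    have hyb : y ≤ b := by
      have := rowLen_le_of_le hle 1
      rw [rowLen_D1, min_eq_right hb] at this; exact this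
    have hcards : x + y + 1 = a + b := by
      have h1 : μ.card = x + min x y := by rw [hμ, card_D]
      have h2 : (D a b).card = a + min a b := card_D a b
      rw [min_eq_right hyx] at h1
      rw [min_eq_right hb] at h2
      omega
    rcases Nat.lt_or_ge y b with hlt | hge
    · right
      have : x = a ∧ y = b - 1 ∧ 1 ≤ b := by omega
      refine ⟨this.2.2, ?_⟩
      rw [hμ, this.1, this.2.1]
    · left
      have hx : x = a - 1 ∧ y = b ∧ b ≤ a - 1 ∧ 1 ≤ a := by omega
      refine ⟨hx.2.2.2, hx.2.2.1, ?_⟩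
      rw [hμ, hx.1, hx.2.1]
  · rintro (⟨ha1, hba, rfl⟩ | ⟨hb1, rfl⟩)
    · refine ⟨D_le_D (by omega) ?_, ?_⟩
      · rw [Nat.min_eq_right hba, Nat.min_eq_right hb]
      · rw [card_D, card_D, Nat.min_eq_right hba, Nat.min_eq_right hb]; omega
    · refine ⟨D_le_D le_rfl ?_, ?_⟩
      · rw [Nat.min_eq_right hb, Nat.min_eq_right (by omega : b - 1 ≤ a)]; omega
      · rw [card_D, card_D, Nat.min_eq_right hb, Nat.min_eq_right (by omega : b - 1 ≤ a)]; omega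

theorem D_inj {x y a b : ℕ} (hyx : y ≤ x) (hba : b ≤ a) (h : D x y = D a b) :
    x = a ∧ y = b := by
  have h0 := congrArg (fun μ => YoungDiagram.rowLen μ 0) h
  have h1 := congrArg (fun μ => YoungDiagram.rowLen μ 1) h
  simp only [rowLen_D0, rowLen_D1] at h0 h1
  omega

theorem D_mem_LambdaSet {a b : ℕ} (hb : b ≤ a) (hd : a - b ≤ 4) :
    D a b ∈ LambdaSet (a + b) 6 := by
  refine ⟨?_, rowLen_D2 a b 2 le_rfl, ?_⟩
  · rw [card_D]; omega
  · rw [rowLen_D0, rowLen_D1]; omega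

section Paths

def P6 : ℕ → Set YoungDiagram := fun j => LambdaSet j 6

noncomputable def cnt (m : ℕ) (ν : YoungDiagram) : ℕ :=
  Nat.card {f : Fin (m + 1) → YoungDiagram // IsTabPath P6 m f ∧ f (Fin.last m) = ν}

theorem cell_lt_card {μ : YoungDiagram} {i j : ℕ} (h : (i, j) ∈ μ) :
    i < μ.card ∧ j < μ.card := by
  constructor
  · have h1 : i < μ.colLen j := mem_iff_lt_colLen.mp h
    have h2 : μ.colLen j = (μ.col j).card := colLen_eq_card μ
    have h3 : μ.col j ⊆ μ.cells := Finset.filter_subset _ _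
    have := Finset.card_le_card h3
    have hc : μ.card = μ.cells.card := rfl
    omega
  · have h1 : j < μ.rowLen i := mem_iff_lt_rowLen.mp h
    have h2 : μ.rowLen i = (μ.row i).card := rowLen_eq_card μ
    have h3 : μ.row i ⊆ μ.cells := Finset.filter_subset _ _
    have := Finset.card_le_card h3
    have hc : μ.card = μ.cells.card := rfl
    omega

theorem finite_paths (m : ℕ) (Q : (Fin (m + 1) → YoungDiagram) → Prop) :
    Finite {f : Fin (m + 1) → YoungDiagram // IsTabPath P6 m f ∧ Q f} := by
  classical
  set B := (Finset.range (m + 1) ×ˢ Finset.range (m + 1)).powerset with hB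
  have key : ∀ f : Fin (m + 1) → YoungDiagram, IsTabPath P6 m f →
      ∀ j, (f j).cells ∈ B := by
    rintro f ⟨h0, hstep, hmem⟩ j
    rw [hB, Finset.mem_powerset]
    rintro ⟨i, c⟩ hic
    rw [YoungDiagram.mem_cells] at hic
    have hcard : (f j).card = (j : ℕ) := (hmem j).1
    have := cell_lt_card hic
    have hj : (j : ℕ) < m + 1 := j.isLt
    simp only [Finset.mem_product, Finset.mem_range]
    omega
  refine Finite.of_injective
    (fun f => (fun j => (⟨(f.1 j).cells, key f.1 f.2.1 j⟩ : {s // s ∈ B}))) ?_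
  intro f g hfg
  apply Subtype.ext
  funext j
  have := congrFun hfg j
  rw [Subtype.mk_eq_mk] at this
  apply SetLike.ext
  intro x
  rw [← YoungDiagram.mem_cells, ← YoungDiagram.mem_cells, this]

theorem D_zero_zero : D 0 0 = ⊥ := by
  apply SetLike.ext
  rintro ⟨i, j⟩
  rw [mem_D]
  simp [YoungDiagram.notMem_bot]

theorem cnt_zero : cnt 0 (D 0 0) = 1 := by
  rw [cnt]
  have hbot : (⊥ : YoungDiagram) ∈ P6 0 := by
    rw [← D_zero_zero]
    exact D_mem_LambdaSet le_rfl (by norm_num)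
  have : Unique {f : Fin 1 → YoungDiagram // IsTabPath P6 0 f ∧ f (Fin.last 0) = D 0 0} := by
    refine ⟨⟨⟨fun _ => ⊥, ⟨rfl, fun j => j.elim0, fun j => ?_⟩, D_zero_zero.symm⟩⟩, ?_⟩
    · have : (j : ℕ) = 0 := by omega
      rw [this]; exact hbot
    · rintro ⟨f, ⟨h0, _, _⟩, _⟩
      apply Subtype.ext
      funext j
      have : j = 0 := Subsingleton.elim j 0
      subst this
      exact h0
  exact Nat.card_unique

theorem cnt_succ (m : ℕ) (ν : YoungDiagram) (hν : ν ∈ LambdaSet (m + 1) 6) :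
    cnt (m + 1) ν =
      Nat.card {g : Fin (m + 1) → YoungDiagram //
        IsTabPath P6 m g ∧ AddBox (g (Fin.last m)) ν} := by
  apply Nat.card_congr
  refine ⟨fun f => ⟨Fin.init f.1, ?_, ?_⟩, fun g => ⟨Fin.snoc g.1 ν, ⟨?_, ?_, ?_⟩, ?_⟩, ?_, ?_⟩
  · obtain ⟨f, ⟨h0, hstep, hmem⟩, hlast⟩ := f
    refine ⟨by simp [Fin.init, h0], fun j => ?_, fun j => ?_⟩
    · have := hstep j.castSucc
      simp only [Fin.init]
      rw [← Fin.succ_castSucc]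
      exact this
    · exact hmem j.castSucc
  · obtain ⟨f, ⟨h0, hstep, hmem⟩, hlast⟩ := f
    have := hstep (Fin.last m)
    rw [Fin.succ_last, hlast] at this
    simpa [Fin.init] using this
  · obtain ⟨g, ⟨h0, hstep, hmem⟩, hlast⟩ := g
    rw [show ((0 : Fin (m + 2))) = Fin.castSucc 0 from rfl, Fin.snoc_castSucc]
    exact h0
  · obtain ⟨g, ⟨h0, hstep, hmem⟩, hlast⟩ := g
    intro j
    refine Fin.lastCases ?_ (fun i => ?_) j
    · rw [Fin.succ_last, Fin.snoc_castSucc, Fin.snoc_last]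
      exact hlast
    · rw [Fin.succ_castSucc, Fin.snoc_castSucc, Fin.snoc_castSucc]
      exact hstep i
  · obtain ⟨g, ⟨h0, hstep, hmem⟩, hlast⟩ := g
    intro j
    refine Fin.lastCases ?_ (fun i => ?_) j
    · rw [Fin.snoc_last]; simpa [P6] using hν
    · rw [Fin.snoc_castSucc]
      simpa using hmem i
  · exact Fin.snoc_last _ _
  · rintro ⟨f, ⟨h0, hstep, hmem⟩, hlast⟩
    apply Subtype.ext
    show Fin.snoc (Fin.init f) ν = f
    rw [← hlast, Fin.snoc_init_self]
  · rintro ⟨g, hg, hlast⟩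
    apply Subtype.ext
    show Fin.init (Fin.snoc g ν : Fin (m + 2) → YoungDiagram) = g
    rw [Fin.init_snoc]

theorem lastmem {m : ℕ} {g : Fin (m + 1) → YoungDiagram} (hg : IsTabPath P6 m g) :
    g (Fin.last m) ∈ LambdaSet m 6 := by
  have := hg.2.2 (Fin.last m)
  simpa [P6] using this

theorem card_split_one (m : ℕ) (ν μ₁ : YoungDiagram)
    (hchar : ∀ μ, μ ∈ LambdaSet m 6 → (AddBox μ ν ↔ μ = μ₁)) :
    Nat.card {g : Fin (m + 1) → YoungDiagram //
        IsTabPath P6 m g ∧ AddBox (g (Fin.last m)) ν} = cnt m μ₁ := by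
  rw [cnt]
  apply Nat.card_congr
  apply Equiv.subtypeEquivRight
  intro g
  constructor
  · rintro ⟨hg, hadd⟩; exact ⟨hg, (hchar _ (lastmem hg)).mp hadd⟩
  · rintro ⟨hg, heq⟩; exact ⟨hg, (hchar _ (lastmem hg)).mpr heq⟩

theorem card_split_two (m : ℕ) (ν μ₁ μ₂ : YoungDiagram) (hne : μ₁ ≠ μ₂)
    (hchar : ∀ μ, μ ∈ LambdaSet m 6 → (AddBox μ ν ↔ μ = μ₁ ∨ μ = μ₂)) :
    Nat.card {g : Fin (m + 1) → YoungDiagram //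
        IsTabPath P6 m g ∧ AddBox (g (Fin.last m)) ν} = cnt m μ₁ + cnt m μ₂ := by
  classical
  rw [cnt, cnt]
  have e1 : {g : Fin (m + 1) → YoungDiagram //
        IsTabPath P6 m g ∧ AddBox (g (Fin.last m)) ν} ≃
      {g : Fin (m + 1) → YoungDiagram //
        (IsTabPath P6 m g ∧ g (Fin.last m) = μ₁) ∨ (IsTabPath P6 m g ∧ g (Fin.last m) = μ₂)} := by
    apply Equiv.subtypeEquivRight
    intro g
    constructor
    · rintro ⟨hg, hadd⟩
      rcases (hchar _ (lastmem hg)).mp hadd with h | h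
      · exact Or.inl ⟨hg, h⟩
      · exact Or.inr ⟨hg, h⟩
    · rintro (⟨hg, h⟩ | ⟨hg, h⟩)
      · exact ⟨hg, (hchar _ (lastmem hg)).mpr (Or.inl h)⟩
      · exact ⟨hg, (hchar _ (lastmem hg)).mpr (Or.inr h)⟩
  have e2 := subtypeOrEquiv
    (fun g : Fin (m + 1) → YoungDiagram => IsTabPath P6 m g ∧ g (Fin.last m) = μ₁)
    (fun g => IsTabPath P6 m g ∧ g (Fin.last m) = μ₂)
    (by
      rw [Pi.disjoint_iff]
      intro g
      rw [Prop.disjoint_iff]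
      rintro ⟨⟨-, h1⟩, -, h2⟩
      exact hne (h1 ▸ h2 ▸ rfl))
  rw [Nat.card_congr (e1.trans e2)]
  haveI := finite_paths m (fun g => g (Fin.last m) = μ₁)
  haveI := finite_paths m (fun g => g (Fin.last m) = μ₂)
  exact Nat.card_sum

end Paths

/-- Closed form for the counts. -/
def F (m d : ℕ) : ℕ :=
  if d ≤ 1 then (3 ^ ((m - 1) / 2) + 1) / 2
  else if d = 2 then 3 ^ ((m - 1) / 2)
  else (3 ^ ((m - 1) / 2) - 1) / 2

theorem pow3_mod2 (e : ℕ) : 3 ^ e % 2 = 1 := by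
  rw [Nat.pow_mod]; norm_num

theorem F_le1 (m d : ℕ) (h : d ≤ 1) : F m d = (3 ^ ((m - 1) / 2) + 1) / 2 := by
  rw [F, if_pos h]

theorem F_two (m : ℕ) : F m 2 = 3 ^ ((m - 1) / 2) := by
  rw [F, if_neg (by norm_num), if_pos rfl]

theorem F_ge3 (m d : ℕ) (h : 3 ≤ d) : F m d = (3 ^ ((m - 1) / 2) - 1) / 2 := by
  rw [F, if_neg (by omega), if_neg (by omega)]

theorem main_count : ∀ m a b : ℕ, b ≤ a → a + b = m → a - b ≤ 4 →
    cnt m (D a b) = F m (a - b) := by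
  intro m
  induction m with
  | zero =>
    intro a b hb hab hd
    have ha : a = 0 := by omega
    have hb' : b = 0 := by omega
    subst ha; subst hb'
    rw [cnt_zero]; norm_num [F]
  | succ m ih =>
    intro a b hb hab hd
    have hν : D a b ∈ LambdaSet (m + 1) 6 := by
      have := D_mem_LambdaSet hb hd
      rwa [hab] at this
    rw [cnt_succ m (D a b) hν]
    rcases Nat.eq_zero_or_pos b with hb0 | hb1
    · -- b = 0, a = m + 1 ≤ 4 : single predecessor D (a-1) 0
      subst hb0
      have ha : a = m + 1 := by omega
      have hchar : ∀ μ, μ ∈ LambdaSet m 6 → (AddBox μ (D a 0) ↔ μ = D (a - 1) 0) := by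
        intro μ _
        rw [addBox_D_iff hb]
        constructor
        · rintro (⟨-, -, h⟩ | ⟨h, -⟩)
          · exact h
          · omega
        · intro h; exact Or.inl ⟨by omega, by omega, h⟩
      rw [card_split_one m _ _ hchar, ih (a - 1) 0 (by omega) (by omega) (by omega)]
      subst ha
      have hm3 : m ≤ 3 := by omega
      interval_cases m <;> norm_num [F]
    · rcases Nat.lt_or_ge b a with hlt | hge
      · rcases Nat.lt_or_ge (a - b) 4 with hd3 | hd4
        · -- 1 ≤ b, b < a, a - b ≤ 3 : two predecessors
          have hne : D (a - 1) b ≠ D a (b - 1) := by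
            intro h
            have := D_inj (by omega) (by omega) h
            omega
          have hchar : ∀ μ, μ ∈ LambdaSet m 6 →
              (AddBox μ (D a b) ↔ μ = D (a - 1) b ∨ μ = D a (b - 1)) := by
            intro μ _
            rw [addBox_D_iff hb]
            constructor
            · rintro (⟨-, -, h⟩ | ⟨-, h⟩)
              · exact Or.inl h
              · exact Or.inr h
            · rintro (h | h)
              · exact Or.inl ⟨by omega, by omega, h⟩
              · exact Or.inr ⟨by omega, h⟩
          rw [card_split_two m _ _ _ hne hchar,
            ih (a - 1) b (by omega) (by omega) (by omega),
            ih a (b - 1) (by omega) (by omega) (by omega)]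
          -- numeric identities
          have hd' : a - b = 1 ∨ a - b = 2 ∨ a - b = 3 := by omega
          rcases hd' with h1 | h2 | h3
          · have e1 : a - 1 - b = 0 := by omega
            have e2 : a - (b - 1) = 2 := by omega
            rw [h1, e1, e2]
            have hm : m = 2 * b := by omega
            have hexp : (m - 1) / 2 + 1 = (m + 1 - 1) / 2 := by omega
            rw [F_le1 (m + 1) 1 le_rfl, F_le1 m 0 (by norm_num), F_two m]
            set x := 3 ^ ((m - 1) / 2) with hx
            have h3x : 3 ^ ((m + 1 - 1) / 2) = 3 * x := by
              rw [← hexp, pow_succ, mul_comm]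
            rw [h3x]
            have := pow3_mod2 ((m - 1) / 2)
            rw [← hx] at this
            omega
          · have e1 : a - 1 - b = 1 := by omega
            have e2 : a - (b - 1) = 3 := by omega
            rw [h2, e1, e2]
            have hexp : (m - 1) / 2 = (m + 1 - 1) / 2 := by omega
            rw [F_two (m + 1), F_le1 m 1 le_rfl, F_ge3 m 3 le_rfl]
            rw [← hexp]
            have h1' := pow3_mod2 ((m - 1) / 2)
            have h2' : 1 ≤ 3 ^ ((m - 1) / 2) := Nat.one_le_pow _ _ (by norm_num)
            omega
          · have e1 : a - 1 - b = 2 := by omega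
            have e2 : a - (b - 1) = 4 := by omega
            rw [h3, e1, e2]
            have hexp : (m - 1) / 2 + 1 = (m + 1 - 1) / 2 := by omega
            rw [F_ge3 (m + 1) 3 le_rfl, F_two m, F_ge3 m 4 (by norm_num)]
            set x := 3 ^ ((m - 1) / 2) with hx
            have h3x : 3 ^ ((m + 1 - 1) / 2) = 3 * x := by
              rw [← hexp, pow_succ, mul_comm]
            rw [h3x]
            have := pow3_mod2 ((m - 1) / 2)
            rw [← hx] at this
            have h2' : 1 ≤ x := Nat.one_le_pow _ _ (by norm_num)
            omega
        · -- a - b = 4 : single predecessor D (a-1) b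
          have hd4' : a - b = 4 := by omega
          have hchar : ∀ μ, μ ∈ LambdaSet m 6 → (AddBox μ (D a b) ↔ μ = D (a - 1) b) := by
            intro μ hμ
            rw [addBox_D_iff hb]
            constructor
            · rintro (⟨-, -, h⟩ | ⟨h1, h⟩)
              · exact h
              · exfalso
                obtain ⟨-, -, hdiff⟩ := hμ
                rw [h] at hdiff
                rw [rowLen_D0, rowLen_D1, Nat.min_eq_right (by omega : b - 1 ≤ a)] at hdiff
                omega
            · intro h; exact Or.inl ⟨by omega, by omega, h⟩
          rw [card_split_one m _ _ hchar, ih (a - 1) b (by omega) (by omega) (by omega)]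
          have e1 : a - 1 - b = 3 := by omega
          rw [hd4', e1]
          have hexp : (m - 1) / 2 = (m + 1 - 1) / 2 := by omega
          rw [F_ge3 (m + 1) 4 (by norm_num), F_ge3 m 3 le_rfl, hexp]
      · -- a = b : single predecessor D a (b - 1)
        have hab' : a = b := by omega
        have hchar : ∀ μ, μ ∈ LambdaSet m 6 → (AddBox μ (D a b) ↔ μ = D a (b - 1)) := by
          intro μ _
          rw [addBox_D_iff hb]
          constructor
          · rintro (⟨-, h1, -⟩ | ⟨-, h⟩)
            · omega
            · exact h
          · intro h; exact Or.inr ⟨by omega, h⟩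
        rw [card_split_one m _ _ hchar, ih a (b - 1) (by omega) (by omega) (by omega)]
        have e1 : a - b = 0 := by omega
        have e2 : a - (b - 1) = 1 := by omega
        rw [e1, e2]
        have hexp : (m - 1) / 2 = (m + 1 - 1) / 2 := by omega
        rw [F_le1 (m + 1) 0 (by norm_num), F_le1 m 1 le_rfl, hexp]

/-- Lemma 2.2(b) (Jones): the counts of restricted tableaux `|𝒯₆([m-p,p])|` for `ℓ = 6`. -/
theorem tab_count_level_six (m p : ℕ) (hm : 1 ≤ m) (hp : 2 * p ≤ m)
    (hd : m - 2 * p ≤ 4) :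
    (m - 2 * p = 0 ∨ m - 2 * p = 1 →
      tabCount (fun j => LambdaSet j 6) m [m - p, p] = (3 ^ ((m - 1) / 2) + 1) / 2) ∧
    (m - 2 * p = 3 ∨ m - 2 * p = 4 →
      tabCount (fun j => LambdaSet j 6) m [m - p, p] = (3 ^ ((m - 1) / 2) - 1) / 2) ∧
    (m - 2 * p = 2 →
      tabCount (fun j => LambdaSet j 6) m [m - p, p] = 3 ^ ((m - 1) / 2)) := by
  have hba : p ≤ m - p := by omega
  have key : tabCount (fun j => LambdaSet j 6) m [m - p, p] = cnt m (D (m - p) p) := by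
    rw [tabCount, cnt]
    apply Nat.card_congr
    apply Equiv.subtypeEquivRight
    intro f
    have hiff : RowsEq (f (Fin.last m)) [m - p, p] ↔ f (Fin.last m) = D (m - p) p := by
      constructor
      · intro h
        have h0 : (f (Fin.last m)).rowLen 0 = m - p := h 0
        have h1 : (f (Fin.last m)).rowLen 1 = p := h 1
        have h2 : (f (Fin.last m)).rowLen 2 = 0 := h 2
        have := eq_D h2
        rw [h0, h1] at this
        exact this
      · intro h i
        rw [h]
        match i with
        | 0 => rw [rowLen_D0]; rfl
        | 1 => rw [rowLen_D1, Nat.min_eq_right hba]; rfl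
        | (n + 2) => rw [rowLen_D2 _ _ _ (by omega)]; rfl
    exact and_congr Iff.rfl hiff
  have hdd : m - p - p = m - 2 * p := by omega
  rw [key, main_count m (m - p) p hba (by omega) (by omega), hdd]
  refine ⟨?_, ?_, ?_⟩
  · rintro (h | h) <;> rw [h]
    · exact F_le1 m 0 (by norm_num)
    · exact F_le1 m 1 le_rfl
  · rintro (h | h) <;> rw [h]
    · exact F_ge3 m 3 le_rfl
    · exact F_ge3 m 4 (by norm_num)
  · intro h; rw [h]; exact F_two m
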